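/- Let (c_1,...,c_N) and (x_1,...,x_N) be real with c_1 < c_2 < ... < c_N and 0 < x_1 < x_2 < ... < x_N. Then the generalized Vandermonde matrix W with entries W_{ij} = x_i^{c_j} has positive determinant. -/

import Mathlib

open Set Finset

-- key zeros lemma
lemma expPoly_zeros : ∀ (N : ℕ) (c a : Fin N → ℝ), StrictMono c →
    ∀ (x : Fin N → ℝ), StrictMono x → (∀ i, 0 < x i) →
    (∀ i, ∑ j, a j * x i ^ c j = 0) → ∀ j, a j = 0 := by
  intro N
  induction N with
  | zero => intro c a _ x _ _ _ j; exact j.elim0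
  | succ N ih =>
    intro c a hc x hx hxpos hz
    -- g t = ∑ j, a j * t ^ (c j - c 0)
    set g : ℝ → ℝ := fun t => ∑ j, a j * t ^ (c j - c 0) with hg
    have hgz : ∀ i, g (x i) = 0 := by
      intro i
      have : g (x i) = (x i ^ (-(c 0))) * ∑ j, a j * x i ^ c j := by
        rw [Finset.mul_sum]
        refine Finset.sum_congr rfl fun j _ => ?_
        rw [sub_eq_neg_add, Real.rpow_add (hxpos i)]
        ring
      rw [this, hz i, mul_zero]
    -- derivative
    set g' : ℝ → ℝ := fun t => ∑ j, a j * (c j - c 0) * t ^ (c j - c 0 - 1) with hg'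
    have hderiv : ∀ t : ℝ, 0 < t → HasDerivAt g (g' t) t := by
      intro t ht
      refine HasDerivAt.fun_sum fun j _ => ?_
      have := (Real.hasDerivAt_rpow_const (p := c j - c 0) (Or.inl ht.ne')).const_mul (a j)
      convert this using 1
      rfl
      ring
    -- Rolle on each interval
    have hroll : ∀ i : Fin N, ∃ y ∈ Ioo (x i.castSucc) (x i.succ), g' y = 0 := by
      intro i
      have hlt : x i.castSucc < x i.succ := hx (Fin.castSucc_lt_succ : i.castSucc < i.succ)
      refine exists_hasDerivAt_eq_zero hlt ?_ ((hgz i.castSucc).trans (hgz i.succ).symm) ?_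
      · intro t ht
        exact (hderiv t (lt_of_lt_of_le (hxpos _) ht.1)).continuousAt.continuousWithinAt
      · intro t ht
        exact hderiv t (lt_trans (hxpos _) ht.1)
    choose y hy hy0 using hroll
    have hypos : ∀ i, 0 < y i := fun i => lt_trans (hxpos _) (hy i).1
    have hymono : StrictMono y := by
      intro i i' hii'
      calc y i < x i.succ := (hy i).2
        _ ≤ x i'.castSucc := hx.monotone (by
            simp [Fin.succ_le_castSucc_iff, hii'])
        _ < y i' := (hy i').1
    have key := ih (fun j => c j.succ - c 0 - 1) (fun j => a j.succ * (c j.succ - c 0))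
      (fun j j' h => by simpa using hc (Fin.succ_lt_succ_iff.mpr h)) y hymono hypos ?_
    · -- coefficients of succ indices vanish
      have ha : ∀ j : Fin N, a j.succ = 0 := by
        intro j
        have h1 := key j
        have h2 : c j.succ - c 0 ≠ 0 := by
          have := hc (Fin.succ_pos j); linarith
        exact (mul_eq_zero.mp h1).resolve_right h2
      intro j
      rcases Fin.eq_zero_or_eq_succ j with rfl | ⟨k, rfl⟩
      · have := hz 0
        rw [Fin.sum_univ_succ] at this
        simp only [ha, zero_mul, Finset.sum_const_zero, add_zero] at this
        have hne : (x 0 : ℝ) ^ c 0 ≠ 0 := (Real.rpow_pos_of_pos (hxpos 0) _).ne'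
        exact (mul_eq_zero.mp this).resolve_right hne
      · exact ha k
    · intro i
      have h := hy0 i
      have heq : g' (y i) = ∑ j : Fin N, a j.succ * (c j.succ - c 0) * y i ^ (c j.succ - c 0 - 1) := by
        simp only [hg', Fin.sum_univ_succ, sub_self, mul_zero, zero_mul, zero_add]
      rw [heq] at h
      simpa using h

lemma genVandermonde_det_ne_zero (N : ℕ) (c x : Fin N → ℝ)
    (hc : StrictMono c) (hx : StrictMono x) (hxpos : ∀ i, 0 < x i) :
    (Matrix.of fun i j : Fin N => (x i) ^ (c j)).det ≠ 0 := by
  intro hdet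
  obtain ⟨v, hv, hmv⟩ := (Matrix.exists_mulVec_eq_zero_iff).mpr hdet
  apply hv
  funext j
  refine expPoly_zeros N c v hc x hx hxpos (fun i => ?_) j
  have := congrFun hmv i
  simpa [Matrix.mulVec, dotProduct, mul_comm] using this


/-- Positivity of the generalized Vandermonde determinant: for strictly increasing
real exponents `c` and strictly increasing positive nodes `x`, the matrix
`W_{ij} = x_i ^ c_j` has positive determinant. -/
theorem generalized_vandermonde_det_pos
    (N : ℕ) (hN : 1 ≤ N) (c x : Fin N → ℝ)
    (hc : StrictMono c) (hx : StrictMono x) (hxpos : ∀ i, 0 < x i) :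
    0 < (Matrix.of fun i j : Fin N => (x i) ^ (c j)).det := by
  -- path of exponents
  set C : ℝ → Fin N → ℝ := fun t j => (1 - t) * (j : ℝ) + t * c j with hC
  have hCmono : ∀ t ∈ Icc (0:ℝ) 1, StrictMono (C t) := by
    intro t ht j k hjk
    have h1 : (j:ℝ) < (k:ℝ) := by exact_mod_cast hjk
    have h2 : c j < c k := hc hjk
    rcases lt_or_eq_of_le ht.1 with h0 | h0
    · have := mul_lt_mul_of_pos_left h2 h0
      have h3 : (1-t) * (j:ℝ) ≤ (1-t) * (k:ℝ) :=
        mul_le_mul_of_nonneg_left h1.le (by linarith [ht.2])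
      simp only [hC]; linarith
    · have ht' : t = 0 := h0.symm
      simp only [hC, ht']
      simpa using h1
  set g : ℝ → ℝ := fun t => (Matrix.of fun i j : Fin N => (x i) ^ (C t j)).det with hgdef
  have hgcont : Continuous g := by
    refine Continuous.matrix_det ?_
    refine continuous_matrix fun i j => ?_
    have : (fun t => x i ^ (C t j)) = fun t => Real.exp (Real.log (x i) * C t j) := by
      funext t
      rw [Real.rpow_def_of_pos (hxpos i)]
    simp only [Matrix.of_apply]
    rw [this]
    exact Real.continuous_exp.comp (by continuity)
  have hg0 : 0 < g 0 := by
    have : g 0 = (Matrix.vandermonde x).det := by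
      simp only [hgdef, hC]
      congr 1
      ext i j
      simp [Matrix.vandermonde, Real.rpow_natCast]
    rw [this, Matrix.det_vandermonde]
    refine Finset.prod_pos fun i _ => Finset.prod_pos fun j hj => ?_
    rw [Finset.mem_Ioi] at hj
    exact sub_pos.mpr (hx hj)
  have hgne : ∀ t ∈ Icc (0:ℝ) 1, g t ≠ 0 := fun t ht =>
    genVandermonde_det_ne_zero N (C t) x (hCmono t ht) hx hxpos
  have hg1 : 0 < g 1 := by
    by_contra h
    push_neg at h
    have hlt : g 1 < 0 := lt_of_le_of_ne h (hgne 1 ⟨zero_le_one, le_refl 1⟩)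
    have := intermediate_value_Icc' (by norm_num : (0:ℝ) ≤ 1) hgcont.continuousOn
    have h0 : (0:ℝ) ∈ Icc (g 1) (g 0) := ⟨hlt.le, hg0.le⟩
    obtain ⟨t, ht, hgt⟩ := this h0
    exact hgne t ht hgt
  have : g 1 = (Matrix.of fun i j : Fin N => (x i) ^ (c j)).det := by
    simp [hgdef, hC]
  rwa [this] at hg1
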